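/- arXiv:1012.5329 — 2 statements merged into one kernel-verified Lean document; each statement's English description precedes it below -/
import Mathlib

section
/- Let I = I(G) be the edge ideal of a finite simple graph G, and suppose a ∈ I/I^2 is a (homogeneous degree-one) regular element of the associated graded ring gr_I(R) = ⊕_{t≥0} I^t/I^{t+1}. Then the sets Ass(R/I^t) form an ascending chain: Ass(R/I^t) ⊂ Ass(R/I^{t+1}) for all t ≥ 1, and moreover Ass(R/I^t) = Ass(I^{t-1}/I^t) for all t ≥ 1. -/
open MvPolynomial

/-- The edge ideal of a (simple) graph, in `K[x_v : v ∈ V]`. -/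
noncomputable def graphIdeal (K : Type) [Field K] {V : Type} (G : SimpleGraph V) :
    Ideal (MvPolynomial V K) :=
  Ideal.span { m : MvPolynomial V K | ∃ u v : V, G.Adj u v ∧ m = X u * X v }

/-- An associated prime of a module is an associated prime of a submodule or of the
corresponding quotient. -/
lemma isAssociatedPrime_sub_or_quot {R M : Type*} [CommRing R] [AddCommGroup M] [Module R M]
    (N : Submodule R M) {P : Ideal R} (h : IsAssociatedPrime P M) :
    IsAssociatedPrime P N ∨ IsAssociatedPrime P (M ⧸ N) := by
  have := associatedPrimes.subset_union_of_exact (f := N.subtype) (g := N.mkQ)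
    N.injective_subtype (LinearMap.exact_subtype_mkQ N) h
  exact this

/-- Multiplication by `e ∈ I` as a linear map `R/Iᵗ → R/Iᵗ⁺¹`. -/
noncomputable def phiMap {R : Type*} [CommRing R] (I : Ideal R) (e : R) (he : e ∈ I)
    (t : ℕ) : (R ⧸ (I ^ t : Ideal R)) →ₗ[R] (R ⧸ (I ^ (t + 1) : Ideal R)) :=
  Submodule.mapQ _ _ (LinearMap.mulLeft R e) (fun x hx => by
    have h : e * x ∈ I * I ^ t := Submodule.mul_mem_mul he hx
    simpa [pow_succ'] using h)

lemma phiMap_apply {R : Type*} [CommRing R] (I : Ideal R) (e : R) (he : e ∈ I)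
    (t : ℕ) (x : R) :
    phiMap I e he t (Submodule.mkQ _ x) = Submodule.mkQ _ (e * x) := by
  simp only [phiMap, Submodule.mkQ_apply, Submodule.mapQ_apply, LinearMap.mulLeft_apply]

/-- The cancellation property: if `e` is a degree-one regular element of `gr_I(R)`, then
`f e ∈ Iᵗ⁺¹` implies `f ∈ Iᵗ`. -/
lemma cancel_of_reg {R : Type*} [CommRing R] {I : Ideal R} {e : R}
    (hreg : ∀ (t : ℕ) (f : R), f ∈ I ^ t → f * e ∈ I ^ (t + 2) → f ∈ I ^ (t + 1))
    (t : ℕ) (f : R) (hfe : f * e ∈ I ^ (t + 1)) : f ∈ I ^ t := by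
  have key : ∀ s : ℕ, s ≤ t → f ∈ I ^ s := by
    intro s
    induction s with
    | zero => intro _; rw [pow_zero, Ideal.one_eq_top]; exact Submodule.mem_top
    | succ s ih =>
      intro hst
      have hs : f ∈ I ^ s := ih (Nat.le_of_succ_le hst)
      have h2 : f * e ∈ I ^ (s + 2) := Ideal.pow_le_pow_right (by omega) hfe
      exact hreg s f hs h2
  exact key t le_rfl

lemma phiMap_injective {R : Type*} [CommRing R] {I : Ideal R} {e : R} (he : e ∈ I)
    (hreg : ∀ (t : ℕ) (f : R), f ∈ I ^ t → f * e ∈ I ^ (t + 2) → f ∈ I ^ (t + 1))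
    (t : ℕ) : Function.Injective (phiMap I e he t) := by
  rw [← LinearMap.ker_eq_bot, eq_bot_iff]
  rintro q hq
  obtain ⟨x, rfl⟩ := Submodule.mkQ_surjective _ q
  rw [LinearMap.mem_ker, phiMap_apply] at hq
  have hex : e * x ∈ (I ^ (t + 1) : Ideal R) := by
    rwa [Submodule.mkQ_apply, Submodule.Quotient.mk_eq_zero] at hq
  have hx : x ∈ (I ^ t : Ideal R) := cancel_of_reg hreg t x (by rwa [mul_comm])
  show Submodule.mkQ _ x ∈ (⊥ : Submodule _ _)
  rw [Submodule.mem_bot, Submodule.mkQ_apply]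
  exact (Submodule.Quotient.mk_eq_zero _).mpr hx

/-- The key inclusion `Ass(R/Iˢ⁺¹) ⊆ Ass(Iˢ/Iˢ⁺¹)`. -/
lemma ass_le_ass_sub {R : Type*} [CommRing R] {I : Ideal R} {e : R} (he : e ∈ I)
    (hreg : ∀ (t : ℕ) (f : R), f ∈ I ^ t → f * e ∈ I ^ (t + 2) → f ∈ I ^ (t + 1)) :
    ∀ s : ℕ,
      associatedPrimes R (R ⧸ (I ^ (s + 1) : Ideal R)) ⊆
        associatedPrimes R
          ↥(Submodule.map (Submodule.mkQ (I ^ (s + 1) : Ideal R)) (I ^ s : Ideal R)) := by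
  intro s
  induction s with
  | zero =>
    have htop : Submodule.map (Submodule.mkQ (I ^ (0 + 1) : Ideal R))
        ((I ^ 0 : Ideal R) : Submodule R R) = ⊤ := by
      rw [pow_zero, Ideal.one_eq_top, Submodule.map_top, Submodule.range_mkQ]
    rw [htop]
    exact associatedPrimes.subset_of_injective
      (f := Submodule.topEquiv.symm.toLinearMap) Submodule.topEquiv.symm.injective
  | succ s ih =>
    intro P hP
    rcases isAssociatedPrime_sub_or_quot
        (Submodule.map (Submodule.mkQ (I ^ (s + 1 + 1) : Ideal R))
          ((I ^ (s + 1) : Ideal R) : Submodule R R)) hP with h | h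
    · exact h
    · have hle : (I ^ (s + 1 + 1) : Ideal R) ≤ (I ^ (s + 1) : Ideal R) :=
        Ideal.pow_le_pow_right (by omega)
      have hP' : P ∈ associatedPrimes R (R ⧸ (I ^ (s + 1) : Ideal R)) :=
        h.map_of_injective
          (Submodule.quotientQuotientEquivQuotient _ _ hle).toLinearMap
          (Submodule.quotientQuotientEquivQuotient _ _ hle).injective
      have hP'' := ih hP'
      have hmapsto : ∀ x ∈ Submodule.map (Submodule.mkQ (I ^ (s + 1) : Ideal R))
          ((I ^ s : Ideal R) : Submodule R R),
          phiMap I e he (s + 1) x ∈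
            Submodule.map (Submodule.mkQ (I ^ (s + 1 + 1) : Ideal R))
              ((I ^ (s + 1) : Ideal R) : Submodule R R) := by
        rintro x ⟨y, hy, rfl⟩
        rw [phiMap_apply]
        refine ⟨e * y, ?_, rfl⟩
        have h2 : e * y ∈ I * I ^ s := Submodule.mul_mem_mul he hy
        simpa [pow_succ'] using h2
      have hrinj : Function.Injective ((phiMap I e he (s + 1)).restrict hmapsto) := by
        intro a b hab
        apply Subtype.ext
        apply phiMap_injective he hreg (s + 1)
        simpa [LinearMap.restrict_apply, Subtype.ext_iff] using hab
      exact associatedPrimes.subset_of_injective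
        (f := (phiMap I e he (s + 1)).restrict hmapsto) hrinj hP''

/-- Let `I = I(G)` be the edge ideal of a graph and suppose some
`a ∈ I/I²` (represented by `e ∈ I`) is a regular element of the associated graded ring
`gr_I(R) = ⊕ Iᵗ/Iᵗ⁺¹`, i.e. for all `t`, `f ∈ Iᵗ` and `f·e ∈ Iᵗ⁺²` imply `f ∈ Iᵗ⁺¹`.
Then `Ass(R/Iᵗ) ⊆ Ass(R/Iᵗ⁺¹)` for all `t ≥ 1`, and moreover
`Ass(R/Iᵗ) = Ass(Iᵗ⁻¹/Iᵗ)` for all `t ≥ 1`. -/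
theorem stmt_18 (K : Type) [Field K] {n : ℕ} (G : SimpleGraph (Fin n))
    (I : Ideal (MvPolynomial (Fin n) K)) (hI : I = graphIdeal K G)
    (e : MvPolynomial (Fin n) K) (he : e ∈ I)
    (hreg : ∀ (t : ℕ) (f : MvPolynomial (Fin n) K),
      f ∈ I ^ t → f * e ∈ I ^ (t + 2) → f ∈ I ^ (t + 1)) :
    (∀ t : ℕ, 1 ≤ t →
      associatedPrimes (MvPolynomial (Fin n) K) (MvPolynomial (Fin n) K ⧸ I ^ t) ⊆
      associatedPrimes (MvPolynomial (Fin n) K)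
        (MvPolynomial (Fin n) K ⧸ I ^ (t + 1))) ∧
    (∀ t : ℕ, 1 ≤ t →
      associatedPrimes (MvPolynomial (Fin n) K) (MvPolynomial (Fin n) K ⧸ I ^ t) =
      associatedPrimes (MvPolynomial (Fin n) K)
        ↥(Submodule.map (Submodule.mkQ (I ^ t : Ideal (MvPolynomial (Fin n) K)))
          (I ^ (t - 1) : Ideal (MvPolynomial (Fin n) K)))) := by
  constructor
  · intro t _
    exact associatedPrimes.subset_of_injective (f := phiMap I e he t) (phiMap_injective he hreg t)
  · intro t ht
    obtain ⟨s, rfl⟩ := Nat.exists_eq_add_of_le ht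
    have h1 : 1 + s = s + 1 := by omega
    rw [h1, Nat.add_sub_cancel]
    refine le_antisymm (ass_le_ass_sub he hreg s) ?_
    exact associatedPrimes.subset_of_injective
      (f := Submodule.subtype _) (Submodule.injective_subtype _)
end

section
/- Let G be a finite simple graph containing a leaf (a vertex of degree one) and let I = I(G) be its edge ideal in R = K[x_1,...,x_n]. Then Ass(R/I^t) ⊂ Ass(R/I^{t+1}) for all t ≥ 1; that is, the sets of associated primes of the powers of I form an ascending chain. -/
open MvPolynomial Pointwise

section Aux

variable {V : Type} (G : SimpleGraph V)

/-- The exponent vector of an edge monomial. -/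
noncomputable def edgeVec (a b : V) : V →₀ ℕ := Finsupp.single a 1 + Finsupp.single b 1

/-- The set of exponent vectors of edges. -/
def edgeSet : Set (V →₀ ℕ) := {d | ∃ a b, G.Adj a b ∧ d = edgeVec a b}

/-- Exponent vectors of products of `t` edges. -/
def edgeSums (t : ℕ) : Set (V →₀ ℕ) :=
  {d | ∃ m : Multiset (V →₀ ℕ), Multiset.card m = t ∧ (∀ x ∈ m, x ∈ edgeSet G) ∧ m.sum = d}

lemma msum_apply (m : Multiset (V →₀ ℕ)) (w : V) :
    m.sum w = (m.map (fun x => x w)).sum := by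
  induction m using Multiset.induction with
  | empty => simp
  | cons a s ih => simp [ih]

lemma edgeSums_zero : edgeSums G 0 = {0} := by
  ext d
  constructor
  · rintro ⟨m, hc, -, hs⟩
    rw [Multiset.card_eq_zero] at hc
    subst hc
    simp at hs
    simp [← hs]
  · rintro rfl
    exact ⟨0, by simp, by simp, by simp⟩

lemma edgeSums_succ (t : ℕ) : edgeSums G (t + 1) = edgeSums G t + edgeSet G := by
  classical
  ext d
  constructor
  · rintro ⟨m, hc, he, hs⟩
    have hne : m ≠ 0 := by
      intro h; rw [h] at hc; simp at hc
    obtain ⟨a, ha⟩ := Multiset.exists_mem_of_ne_zero hne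
    refine ⟨(m.erase a).sum, ⟨m.erase a, ?_, fun x hx => he x (Multiset.mem_of_mem_erase hx), rfl⟩,
      a, he a ha, ?_⟩
    · rw [Multiset.card_erase_of_mem ha, hc]; rfl
    · rw [← hs]
      conv_rhs => rw [← Multiset.cons_erase ha, Multiset.sum_cons]
      exact add_comm _ _
  · rintro ⟨d1, ⟨m, hc, he, hs⟩, a, haE, rfl⟩
    refine ⟨a ::ₘ m, by simp [hc], ?_, by simp [hs, add_comm]⟩
    intro x hx
    rcases Multiset.mem_cons.mp hx with h | h
    · subst h; exact haE
    · exact he x h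

variable (K : Type) [Field K]

lemma graphIdeal_eq :
    graphIdeal K G = Ideal.span ((fun d => monomial d (1 : K)) '' edgeSet G) := by
  unfold graphIdeal
  congr 1
  ext p
  constructor
  · rintro ⟨a, b, hab, rfl⟩
    exact ⟨edgeVec a b, ⟨a, b, hab, rfl⟩, by
      simp [edgeVec, X, monomial_mul]⟩
  · rintro ⟨d, ⟨a, b, hab, rfl⟩, rfl⟩
    exact ⟨a, b, hab, by simp [edgeVec, X, monomial_mul]⟩

lemma graphIdeal_pow (t : ℕ) :
    graphIdeal K G ^ t = Ideal.span ((fun d => monomial d (1 : K)) '' edgeSums G t) := by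
  induction t with
  | zero =>
    rw [pow_zero, edgeSums_zero, Set.image_singleton]
    simp only [monomial_zero']
    rw [MvPolynomial.C_1, Ideal.span_singleton_one, Ideal.one_eq_top]
  | succ t ih =>
    rw [pow_succ, ih, graphIdeal_eq, Ideal.span_mul_span', edgeSums_succ]
    congr 1
    ext p
    constructor
    · rintro ⟨x, ⟨d1, h1, rfl⟩, y, ⟨d2, h2, rfl⟩, rfl⟩
      exact ⟨d1 + d2, ⟨d1, h1, d2, h2, rfl⟩, by simp [monomial_mul]⟩
    · rintro ⟨d, ⟨d1, h1, d2, h2, rfl⟩, rfl⟩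
      exact ⟨monomial d1 1, ⟨d1, h1, rfl⟩, monomial d2 1, ⟨d2, h2, rfl⟩, by
        simp [monomial_mul]⟩

end Aux

section Leaf

variable {n : ℕ} (G : SimpleGraph (Fin n)) (v u : Fin n)

/-- The key combinatorial lemma: if a sum of `t+1` edges divides `xi * x_v x_u`, then some
sum of `t` edges divides `xi`, provided `v` is a leaf with unique neighbor `u`. -/
lemma edgeSums_div (hleaf : G.neighborSet v = {u}) (t : ℕ) (xi : Fin n →₀ ℕ)
    (d : Fin n →₀ ℕ) (hd : d ∈ edgeSums G (t + 1)) (hle : d ≤ xi + edgeVec v u) :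
    ∃ d' ∈ edgeSums G t, d' ≤ xi := by
  classical
  have hadj : G.Adj v u := by
    have : u ∈ G.neighborSet v := by rw [hleaf]; exact Set.mem_singleton u
    exact this
  have hvune : v ≠ u := hadj.ne
  obtain ⟨m, hc, he, rfl⟩ := hd
  have hVonly : ∀ x ∈ m, x v ≠ 0 → x = edgeVec v u := by
    intro x hx hxv
    obtain ⟨a, b, hab, rfl⟩ := he x hx
    have hab' : a = v ∨ b = v := by
      by_contra h
      push_neg at h
      have h1 : (edgeVec a b) v = 0 := by
        simp only [edgeVec, Finsupp.add_apply, Finsupp.single_apply,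
          if_neg h.1, if_neg h.2, add_zero]
      exact hxv h1
    rcases hab' with h | h
    · have hb : b ∈ G.neighborSet v := by rw [← h]; exact hab
      rw [hleaf] at hb
      simp only [Set.mem_singleton_iff] at hb
      rw [h, hb]
    · have ha2 : a ∈ G.neighborSet v := by rw [← h]; exact hab.symm
      rw [hleaf] at ha2
      simp only [Set.mem_singleton_iff] at ha2
      rw [h, ha2, edgeVec, edgeVec, add_comm]
  by_cases hvu : edgeVec v u ∈ m
  · -- remove a copy of the leaf edge
    refine ⟨(m.erase (edgeVec v u)).sum,
      ⟨m.erase (edgeVec v u), by rw [Multiset.card_erase_of_mem hvu, hc]; rfl,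
        fun x hx => he x (Multiset.mem_of_mem_erase hx), rfl⟩, ?_⟩
    have hsum : m.sum = (m.erase (edgeVec v u)).sum + edgeVec v u := by
      conv_lhs => rw [← Multiset.cons_erase hvu]
      rw [Multiset.sum_cons, add_comm]
    rw [hsum] at hle
    intro w
    have := hle w
    simp only [Finsupp.add_apply] at this ⊢
    omega
  · -- no leaf edge occurs; then no edge touches `v`
    have hv0 : m.sum v = 0 := by
      rw [msum_apply]
      apply Multiset.sum_eq_zero
      intro x hx
      obtain ⟨y, hy, rfl⟩ := Multiset.mem_map.mp hx
      by_contra h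
      exact hvu (hVonly y hy h ▸ hy)
    have hevv : (edgeVec v u) u = 1 := by
      simp [edgeVec, Finsupp.single_apply, hvune]
    by_cases hu : ∃ x ∈ m, x u ≠ 0
    · -- remove an edge containing `u`
      obtain ⟨x, hx, hxu⟩ := hu
      refine ⟨(m.erase x).sum,
        ⟨m.erase x, by rw [Multiset.card_erase_of_mem hx, hc]; rfl,
          fun y hy => he y (Multiset.mem_of_mem_erase hy), rfl⟩, ?_⟩
      have hsum : m.sum = (m.erase x).sum + x := by
        conv_lhs => rw [← Multiset.cons_erase hx]
        rw [Multiset.sum_cons, add_comm]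
      intro w
      have h1 := hle w
      rw [hsum] at h1
      simp only [Finsupp.add_apply] at h1 ⊢
      by_cases hwv : w = v
      · subst hwv
        have h3 : (m.erase x).sum w + x w = 0 := by
          rw [← Finsupp.add_apply, ← hsum]; exact hv0
        omega
      · by_cases hwu : w = u
        · subst hwu
          have hxw : 1 ≤ x w := Nat.one_le_iff_ne_zero.mpr hxu
          rw [hevv] at h1
          omega
        · have hev : (edgeVec v u) w = 0 := by
            simp only [edgeVec, Finsupp.add_apply, Finsupp.single_apply,
              if_neg (fun h : v = w => hwv h.symm), if_neg (fun h : u = w => hwu h.symm),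
              add_zero]
          rw [hev] at h1
          omega
    · -- no edge touches `u` or `v`; the whole sum divides xi, drop any edge
      push_neg at hu
      have hu0 : m.sum u = 0 := by
        rw [msum_apply]
        apply Multiset.sum_eq_zero
        intro x hx
        obtain ⟨y, hy, rfl⟩ := Multiset.mem_map.mp hx
        exact hu y hy
      have hne : m ≠ 0 := by
        intro h; rw [h] at hc; simp at hc
      obtain ⟨a, ha⟩ := Multiset.exists_mem_of_ne_zero hne
      refine ⟨(m.erase a).sum,
        ⟨m.erase a, by rw [Multiset.card_erase_of_mem ha, hc]; rfl,
          fun y hy => he y (Multiset.mem_of_mem_erase hy), rfl⟩, ?_⟩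
      have hsum : m.sum = (m.erase a).sum + a := by
        conv_lhs => rw [← Multiset.cons_erase ha]
        rw [Multiset.sum_cons, add_comm]
      intro w
      have h1 := hle w
      rw [hsum] at h1
      simp only [Finsupp.add_apply] at h1 ⊢
      by_cases hwv : w = v
      · subst hwv
        have h3 : (m.erase a).sum w + a w = 0 := by
          rw [← Finsupp.add_apply, ← hsum]; exact hv0
        omega
      · by_cases hwu : w = u
        · subst hwu
          have h3 : (m.erase a).sum w + a w = 0 := by
            rw [← Finsupp.add_apply, ← hsum]; exact hu0
          omega
        · have hev : (edgeVec v u) w = 0 := by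
            simp only [edgeVec, Finsupp.add_apply, Finsupp.single_apply,
              if_neg (fun h : v = w => hwv h.symm), if_neg (fun h : u = w => hwu h.symm),
              add_zero]
          rw [hev] at h1
          omega

variable (K : Type) [Field K]

/-- The colon lemma: `(I^{t+1} : x_v x_u) ⊆ I^t`. -/
lemma colon_lemma (hleaf : G.neighborSet v = {u}) (t : ℕ) (f : MvPolynomial (Fin n) K)
    (hf : f * (X v * X u) ∈ graphIdeal K G ^ (t + 1)) : f ∈ graphIdeal K G ^ t := by
  rw [graphIdeal_pow] at hf ⊢
  rw [mem_ideal_span_monomial_image] at hf ⊢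
  intro xi hxi
  have hXX : (X v * X u : MvPolynomial (Fin n) K) = monomial (edgeVec v u) 1 := by
    simp [edgeVec, X, monomial_mul]
  have hmem : xi + edgeVec v u ∈ (f * (X v * X u)).support := by
    rw [hXX, MvPolynomial.mem_support_iff, coeff_mul_monomial, mul_one]
    exact MvPolynomial.mem_support_iff.mp hxi
  obtain ⟨d, hd, hdle⟩ := hf _ hmem
  exact edgeSums_div G v u hleaf t xi d hd hdle

end Leaf

/-- If a graph `G` has a leaf (a vertex of degree one), then the sets
of associated primes of the powers of the edge ideal `I = I(G)` form an ascending chain: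
`Ass(R/Iᵗ) ⊆ Ass(R/Iᵗ⁺¹)` for all `t ≥ 1`. -/
theorem stmt_19 (K : Type) [Field K] {n : ℕ} (G : SimpleGraph (Fin n))
    (v u : Fin n) (hleaf : G.neighborSet v = {u}) :
    ∀ t : ℕ, 1 ≤ t →
      associatedPrimes (MvPolynomial (Fin n) K)
          (MvPolynomial (Fin n) K ⧸ (graphIdeal K G) ^ t) ⊆
      associatedPrimes (MvPolynomial (Fin n) K)
          (MvPolynomial (Fin n) K ⧸ (graphIdeal K G) ^ (t + 1)) := by
  intro t _ P hP
  obtain ⟨hprime, x, hx⟩ := hP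
  obtain ⟨c, rfl⟩ := Ideal.Quotient.mk_surjective x
  have hadj : G.Adj v u := by
    have : u ∈ G.neighborSet v := by rw [hleaf]; exact Set.mem_singleton u
    exact this
  have hedge : (X v * X u : MvPolynomial (Fin n) K) ∈ graphIdeal K G :=
    Ideal.subset_span ⟨v, u, hadj, rfl⟩
  have hsmul : ∀ (J : Ideal (MvPolynomial (Fin n) K)) (a b : MvPolynomial (Fin n) K),
      a • (Ideal.Quotient.mk J b) = Ideal.Quotient.mk J (a * b) := fun J a b => rfl
  refine ⟨hprime, Ideal.Quotient.mk _ (c * (X v * X u)), ?_⟩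
  rw [hx]
  congr 1
  ext r
  rw [Submodule.mem_colon_singleton, Submodule.mem_colon_singleton, Submodule.mem_bot,
    Submodule.mem_bot, hsmul, hsmul, Ideal.Quotient.eq_zero_iff_mem,
    Ideal.Quotient.eq_zero_iff_mem]
  have hmemP : r * c ∈ graphIdeal K G ^ t ↔ r * c ∈ graphIdeal K G ^ t := Iff.rfl
  constructor
  · intro hr
    rw [hmemP] at hr
    have h : r * (c * (X v * X u)) = (r * c) * (X v * X u) := by ring
    rw [h, pow_succ]
    exact Ideal.mul_mem_mul hr hedge
  · intro hr
    rw [hmemP]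
    have h : r * (c * (X v * X u)) = (r * c) * (X v * X u) := by ring
    rw [h] at hr
    exact colon_lemma G v u K hleaf t (r * c) hr
end
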